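/- Under the construction hypotheses (a distributive lattice D, groups G_α, and transitive isomorphisms φ_{α,β} for β ≤ α with ψ = φ^{-1}), the operations on S = Σ_{α∈D} G_α satisfy the left distributive law: z·(x + y) = z·x + z·y for all x, y, z ∈ S. -/

import Mathlib

variable {D : Type*} [DistribLattice D] {G : D → Type*} [∀ α : D, Group (G α)]

/-- Multiplication on the disjoint union `S = Σ α, G α`:
`(α, x) · (β, y) = (αβ, φ_{α,αβ}(x) · φ_{β,αβ}(y))`. -/
def cMul (φ : ∀ α β : D, β ≤ α → (G α ≃* G β)) (s t : Σ α : D, G α) :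
    Σ α : D, G α :=
  ⟨s.1 ⊓ t.1,
    φ s.1 (s.1 ⊓ t.1) inf_le_left s.2 * φ t.1 (s.1 ⊓ t.1) inf_le_right t.2⟩

/-- Addition on the disjoint union `S = Σ α, G α`:
`(α, x) + (β, y) = (α + β, ψ_{α,α+β}(x))`, where `ψ_{β,α} = (φ_{α,β})⁻¹`
for `β ≤ α` (each `G α` carries the left-zero addition). -/
def cAdd (φ : ∀ α β : D, β ≤ α → (G α ≃* G β)) (s t : Σ α : D, G α) :
    Σ α : D, G α :=
  ⟨s.1 ⊔ t.1, (φ (s.1 ⊔ t.1) s.1 le_sup_left).symm s.2⟩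

/-- Under the construction hypotheses, the operations on
`S = Σ α, G α` satisfy the left distributive law:
`z · (x + y) = z·x + z·y` for all `x, y, z ∈ S`. -/
theorem construction_left_distrib
    (φ : ∀ α β : D, β ≤ α → (G α ≃* G β))
    (hφ_id : ∀ (α : D) (x : G α), φ α α le_rfl x = x)
    (hφ_trans : ∀ {α β γ : D} (h1 : γ ≤ β) (h2 : β ≤ α) (x : G α),
      φ β γ h1 (φ α β h2 x) = φ α γ (h1.trans h2) x)
    (x y z : Σ α : D, G α) :
    cMul φ z (cAdd φ x y) = cAdd φ (cMul φ z x) (cMul φ z y) := by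
  obtain ⟨α, xv⟩ := x
  obtain ⟨β, yv⟩ := y
  obtain ⟨γ, zv⟩ := z
  simp only [cMul, cAdd]
  have key : ∀ {a b : D} (h : a = b) (u : G a) (v : G b),
      φ a b h.ge u = v → (⟨a, u⟩ : Σ α : D, G α) = ⟨b, v⟩ := by
    intro a b h u v hv
    subst h
    rw [hφ_id] at hv
    rw [hv]
  have h : γ ⊓ (α ⊔ β) = γ ⊓ α ⊔ γ ⊓ β := inf_sup_left γ α β
  refine key h _ _ ?_
  apply (φ (γ ⊓ α ⊔ γ ⊓ β) (γ ⊓ α) le_sup_left).injective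
  erw [MulEquiv.apply_symm_apply, map_mul, map_mul, hφ_trans, hφ_trans, hφ_trans, hφ_trans]
  congr 1
  have := hφ_trans (γ := γ ⊓ α) inf_le_right (le_sup_left : α ≤ α ⊔ β) ((φ (α ⊔ β) α le_sup_left).symm xv)
  rw [MulEquiv.apply_symm_apply] at this
  rw [← this]
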